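/- Assume that neither a nor b is an eigenvalue of T(·) (T(a) and T(b) are invertible) and that T is continuously differentiable on (a,b). If x*T'(ρ(x))x < 0 for every nonzero x ∈ ℂ^n, then the interval J = (a,b) is of negative type. -/

import Mathlib

open Matrix Set
open scoped ComplexOrder


lemma herm_quad_real {n : ℕ} {A : Matrix (Fin n) (Fin n) ℂ} (h : A.IsHermitian)
    (x : Fin n → ℂ) : (star x ⬝ᵥ A *ᵥ x).im = 0 := by
  have hc : (starRingEnd ℂ) (star x ⬝ᵥ A *ᵥ x) = star x ⬝ᵥ A *ᵥ x := by
    have : star (star x ⬝ᵥ A *ᵥ x) = star x ⬝ᵥ A *ᵥ x := by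
      calc star (star x ⬝ᵥ A *ᵥ x) = star (A *ᵥ x) ⬝ᵥ x := by
            rw [← star_dotProduct]
        _ = (star x ᵥ* Aᴴ) ⬝ᵥ x := by rw [star_mulVec]
        _ = star x ⬝ᵥ Aᴴ *ᵥ x := by rw [← dotProduct_mulVec]
        _ = star x ⬝ᵥ A *ᵥ x := by rw [h.eq]
    exact this
  exact Complex.conj_eq_iff_im.mp hc

lemma quad_hasDerivAt {n : ℕ} {T T' : ℝ → Matrix (Fin n) (Fin n) ℂ} {μ : ℝ}
    (h : ∀ i j : Fin n, HasDerivAt (fun t : ℝ => T t i j) (T' μ i j) μ)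
    (x : Fin n → ℂ) :
    HasDerivAt (fun t => star x ⬝ᵥ T t *ᵥ x) (star x ⬝ᵥ T' μ *ᵥ x) μ := by
  have : ∀ t, star x ⬝ᵥ T t *ᵥ x = ∑ i, ∑ j, star (x i) * (T t i j * x j) := by
    intro t
    simp [dotProduct, mulVec, Finset.mul_sum]
  simp only [this]
  have h' : star x ⬝ᵥ T' μ *ᵥ x = ∑ i, ∑ j, star (x i) * (T' μ i j * x j) := by
    simp [dotProduct, mulVec, Finset.mul_sum]
  rw [h']
  apply HasDerivAt.fun_sum
  intro i _
  apply HasDerivAt.fun_sum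
  intro j _
  exact ((h i j).mul_const (x j)).const_mul (star (x i))

/-- If `T a`, `T b` are invertible, `T` is continuously differentiable on
`(a,b)` with derivative `T'`, and `x* T'(ρ(x)) x < 0` for every nonzero `x`, then the
interval `(a,b)` is of negative type. -/
theorem interval_negative_type_of_deriv_neg
    (n : ℕ) (hn : 1 ≤ n) (a b : ℝ) (hab : a < b)
    (T T' : ℝ → Matrix (Fin n) (Fin n) ℂ)
    (hTcont : ContinuousOn T (Set.Icc a b))
    (hTherm : ∀ μ ∈ Set.Icc a b, (T μ).IsHermitian)
    (hT'deriv : ∀ μ ∈ Set.Ioo a b, ∀ i j : Fin n,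
      HasDerivAt (fun t : ℝ => T t i j) (T' μ i j) μ)
    (hT'cont : ContinuousOn T' (Set.Ioo a b))
    (ρ : (Fin n → ℂ) → ℝ)
    (hρcont : ContinuousOn ρ {x : Fin n → ℂ | x ≠ 0})
    (hρmem : ∀ x : Fin n → ℂ, x ≠ 0 → ρ x ∈ Set.Ioo a b)
    (hρroot : ∀ x : Fin n → ℂ, x ≠ 0 → star x ⬝ᵥ (T (ρ x)) *ᵥ x = 0)
    (hρuniq : ∀ x : Fin n → ℂ, x ≠ 0 → ∀ μ ∈ Set.Ioo a b,
      star x ⬝ᵥ (T μ) *ᵥ x = 0 → μ = ρ x)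
    (hTa : IsUnit (T a)) (hTb : IsUnit (T b))
    (hderiv_neg : ∀ x : Fin n → ℂ, x ≠ 0 → (star x ⬝ᵥ (T' (ρ x)) *ᵥ x).re < 0) :
    ∀ x : Fin n → ℂ, x ≠ 0 → ∀ μ ∈ Set.Ioo a b, μ ≠ ρ x →
      (μ - ρ x) * (star x ⬝ᵥ (T μ) *ᵥ x).re < 0 := by
  intro x hx μ hμ hne
  set r := ρ x with hr
  set g : ℝ → ℝ := fun t => (star x ⬝ᵥ T t *ᵥ x).re with hg
  have hrmem : r ∈ Set.Ioo a b := hρmem x hx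
  have hgr : g r = 0 := by simp [hg, hr, hρroot x hx]
  -- zeros of g in (a,b) are exactly r
  have gzero : ∀ ν ∈ Set.Ioo a b, g ν = 0 → ν = r := by
    intro ν hν h0
    refine hρuniq x hx ν hν (Complex.ext h0 ?_)
    simpa using herm_quad_real (hTherm ν (Set.Ioo_subset_Icc_self hν)) x
  -- continuity of g on Icc a b
  have hentry : ∀ i j : Fin n, ContinuousOn (fun t => T t i j) (Set.Icc a b) := by
    intro i j
    exact ((continuous_apply j).comp (continuous_apply i)).comp_continuousOn hTcont
  have hgc : ContinuousOn g (Set.Icc a b) := by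
    have : ContinuousOn (fun t => star x ⬝ᵥ T t *ᵥ x) (Set.Icc a b) := by
      simp only [dotProduct, mulVec]
      apply continuousOn_finset_sum
      intro i _
      apply ContinuousOn.mul continuousOn_const
      apply continuousOn_finset_sum
      intro j _
      exact (hentry i j).mul continuousOn_const
    exact Complex.continuous_re.comp_continuousOn this
  -- derivative of g at r
  have hgderiv : HasDerivAt g ((star x ⬝ᵥ T' r *ᵥ x).re) r := by
    have h1 := quad_hasDerivAt (hT'deriv r hrmem) x
    exact (Complex.reCLM.hasFDerivAt.comp_hasDerivAt r h1)
  rw [hasDerivAt_iff_tendsto_slope] at hgderiv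
  have hev : ∀ᶠ ν in nhdsWithin r {r}ᶜ, slope g r ν < 0 :=
    hgderiv.eventually (gt_mem_nhds (hderiv_neg x hx))
  rw [eventually_nhdsWithin_iff, Metric.eventually_nhds_iff] at hev
  obtain ⟨δ, hδ, hδ'⟩ := hev
  have key : ∀ ν, ν ≠ r → |ν - r| < δ → (ν - r) * g ν < 0 := by
    intro ν hνr hνδ
    have hs := hδ' (show dist ν r < δ by rwa [Real.dist_eq]) hνr
    rw [slope_def_field] at hs
    have : (g ν - g r) / (ν - r) < 0 := hs
    rw [hgr, sub_zero, div_neg_iff] at this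
    rcases this with ⟨h1, h2⟩ | ⟨h1, h2⟩
    · nlinarith
    · nlinarith
  have hgμne : g μ ≠ 0 := fun h0 => hne (gzero μ hμ h0)
  rcases lt_or_gt_of_ne hne with hlt | hgt
  · -- μ < r : show g μ > 0
    set ν := r - min δ (r - μ) / 2 with hν
    have hmin : 0 < min δ (r - μ) := lt_min hδ (by linarith)
    have hν1 : ν < r := by simp only [hν]; linarith
    have hν2 : μ < ν := by
      have : min δ (r - μ) ≤ r - μ := min_le_right _ _
      simp only [hν]; linarith
    have hν3 : |ν - r| < δ := by
      have h1 : min δ (r - μ) ≤ δ := min_le_left _ _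
      rw [abs_sub_lt_iff]; constructor <;> simp only [hν] <;> linarith
    have hgν : 0 < g ν := by
      have := key ν (ne_of_lt hν1) hν3
      nlinarith [this, sub_neg.mpr hν1]
    have hgμ : 0 < g μ := by
      rcases lt_or_gt_of_ne hgμne with h | h
      · exfalso
        have hsub : Set.Icc μ ν ⊆ Set.Icc a b := by
          apply Set.Icc_subset_Icc <;> [exact le_of_lt hμ.1; linarith [hrmem.2]]
        have := intermediate_value_Icc (le_of_lt hν2) (hgc.mono hsub)
        obtain ⟨c, hc, hc0⟩ := this ⟨le_of_lt h, le_of_lt hgν⟩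
        have hcIoo : c ∈ Set.Ioo a b := ⟨lt_of_lt_of_le hμ.1 hc.1, lt_of_le_of_lt hc.2 (lt_trans hν1 hrmem.2)⟩
        have hcr := gzero c hcIoo hc0
        rw [hcr] at hc
        linarith [hc.2]
      · exact h
    exact mul_neg_of_neg_of_pos (by linarith) hgμ
  · -- r < μ : show g μ < 0
    set ν := r + min δ (μ - r) / 2 with hν
    have hmin : 0 < min δ (μ - r) := lt_min hδ (by linarith)
    have hν1 : r < ν := by simp only [hν]; linarith
    have hν2 : ν < μ := by
      have : min δ (μ - r) ≤ μ - r := min_le_right _ _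
      simp only [hν]; linarith
    have hν3 : |ν - r| < δ := by
      have h1 : min δ (μ - r) ≤ δ := min_le_left _ _
      rw [abs_sub_lt_iff]; constructor <;> simp only [hν] <;> linarith
    have hgν : g ν < 0 := by
      have := key ν (ne_of_gt hν1) hν3
      nlinarith [this, sub_pos.mpr hν1]
    have hgμ : g μ < 0 := by
      rcases lt_or_gt_of_ne hgμne with h | h
      · exact h
      · exfalso
        have hsub : Set.Icc ν μ ⊆ Set.Icc a b := by
          apply Set.Icc_subset_Icc <;> [linarith [hrmem.1]; exact le_of_lt hμ.2]
        have := intermediate_value_Icc (le_of_lt hν2) (hgc.mono hsub)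
        obtain ⟨c, hc, hc0⟩ := this ⟨le_of_lt hgν, le_of_lt h⟩
        have hcIoo : c ∈ Set.Ioo a b := ⟨lt_of_lt_of_le (lt_trans hrmem.1 hν1) hc.1, lt_of_le_of_lt hc.2 hμ.2⟩
        have hcr := gzero c hcIoo hc0
        rw [hcr] at hc
        linarith [hc.1]
    exact mul_neg_of_pos_of_neg (by linarith) hgμ
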